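/- Let A ∈ K^{m×N} (K = R or C) be a matrix all of whose entries have modulus 1, and suppose there is a constant C > 0 such that ||Ax||_4^4 ≤ C m ||x||_2^4 for all s-sparse x ∈ K^N, where s ≤ N. Then m ≥ C^{−1} s². -/

import Mathlib

/-- For a matrix with unimodular entries, if `‖Ax‖₄⁴ ≤ C m ‖x‖₂⁴` for all `s`-sparse
`x`, then `m ≥ C⁻¹ s²`. -/
theorem stmt12 (𝕜 : Type) [RCLike 𝕜] (m N s : ℕ) (hm : 1 ≤ m) (hs : s ≤ N)
    (C : ℝ) (hC : 0 < C)
    (A : Matrix (Fin m) (Fin N) 𝕜) (hA : ∀ j k, ‖A j k‖ = 1)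
    (h : ∀ x : Fin N → 𝕜, {k | x k ≠ 0}.ncard ≤ s →
      ∑ j, ‖A.mulVec x j‖ ^ 4 ≤ C * m * (∑ k, ‖x k‖ ^ 2) ^ 2) :
    (m : ℝ) ≥ C⁻¹ * s ^ 2 := by
  rcases Nat.eq_zero_or_pos s with hs0 | hs0
  · subst hs0; simp
  set i0 : Fin m := ⟨0, hm⟩
  set x : Fin N → 𝕜 := fun k => if (k : ℕ) < s then (starRingEnd 𝕜) (A i0 k) else 0 with hx
  have hcard : (Finset.univ.filter (fun k : Fin N => (k : ℕ) < s)).card = s := by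
    have : (Finset.univ.filter (fun k : Fin N => (k : ℕ) < s)).card = (Finset.range s).card := by
      refine Finset.card_nbij (i := fun k => (k : ℕ)) ?_ ?_ ?_
      · intro k hk; simp at hk; simp [hk]
      · intro a _ b _ hab; exact Fin.ext hab
      · intro a ha
        simp only [Finset.coe_range, Set.mem_Iio] at ha
        exact ⟨⟨a, lt_of_lt_of_le ha hs⟩, by simp [ha], rfl⟩
    simpa using this
  have hsparse : {k | x k ≠ 0}.ncard ≤ s := by
    have hsub : {k | x k ≠ 0} ⊆ ↑(Finset.univ.filter (fun k : Fin N => (k : ℕ) < s)) := by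
      intro k hk
      simp only [Finset.coe_filter, Set.mem_setOf_eq, Finset.mem_univ, true_and]
      by_contra hlt
      exact hk (by simp [hx, hlt])
    calc {k | x k ≠ 0}.ncard
        ≤ (↑(Finset.univ.filter (fun k : Fin N => (k : ℕ) < s)) : Set (Fin N)).ncard :=
          Set.ncard_le_ncard hsub (Finset.finite_toSet _)
      _ = s := by rw [Set.ncard_coe_finset, hcard]
  have hxnorm : ∑ k, ‖x k‖ ^ 2 = (s : ℝ) := by
    have heq : ∀ k : Fin N, ‖x k‖ ^ 2 = if (k : ℕ) < s then (1 : ℝ) else 0 := by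
      intro k; by_cases hk : (k : ℕ) < s <;> simp [hx, hk, hA]
    rw [Finset.sum_congr rfl fun k _ => heq k, Finset.sum_ite, Finset.sum_const,
      Finset.sum_const, hcard]
    simp
  have hAx0 : A.mulVec x i0 = (s : 𝕜) := by
    simp only [Matrix.mulVec, dotProduct, hx, mul_ite, mul_zero]
    have heq : ∀ k : Fin N, (if (k : ℕ) < s then A i0 k * (starRingEnd 𝕜) (A i0 k) else 0)
        = if (k : ℕ) < s then (1 : 𝕜) else 0 := by
      intro k; by_cases hk : (k : ℕ) < s <;> simp [hk, RCLike.mul_conj, hA]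
    rw [Finset.sum_congr rfl fun k _ => heq k, Finset.sum_ite, Finset.sum_const,
      Finset.sum_const, hcard]
    simp
  have hkey := h x hsparse
  rw [hxnorm] at hkey
  have hlow : (s : ℝ) ^ 4 ≤ ∑ j, ‖A.mulVec x j‖ ^ 4 := by
    have := Finset.single_le_sum (f := fun j => ‖A.mulVec x j‖ ^ 4)
      (fun j _ => by positivity) (Finset.mem_univ i0)
    simp only [hAx0, RCLike.norm_natCast] at this
    exact this
  have hs' : (0 : ℝ) < (s : ℝ) ^ 2 := by positivity
  rw [ge_iff_le, inv_mul_le_iff₀ hC]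
  nlinarith [hlow.trans hkey, hs']
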